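/- For every squarefree positive integer N, the index of Γ₀(N) in Γ₀(N)⁺ equals 2^{ω(N)}, where ω(N) is the number of distinct prime divisors of N. -/

import Mathlib

/-- The set `Γ₀(N)⁺ ⊆ SL₂(ℝ)` of matrices of the form `e^{-1/2} (a, b; c, d)` with
`a, b, c, d, e ∈ ℤ`, `e > 0`, `e ∣ N`, `e ∣ a`, `e ∣ d`, `N ∣ c` and determinant
`a d - b c = e`. -/
def GammaNPlus (N : ℕ) : Set (Matrix.SpecialLinearGroup (Fin 2) ℝ) :=
  {g | ∃ (a b c d : ℤ) (e : ℕ), 0 < e ∧ e ∣ N ∧ (e : ℤ) ∣ a ∧ (e : ℤ) ∣ d ∧ (N : ℤ) ∣ c ∧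
    a * d - b * c = (e : ℤ) ∧
    (g : Matrix (Fin 2) (Fin 2) ℝ) =
      (Real.sqrt e)⁻¹ • !![(a : ℝ), (b : ℝ); (c : ℝ), (d : ℝ)]}

/-- The set `Γ₀(N) ⊆ SL₂(ℝ)` of integer matrices of determinant `1` whose lower-left
entry is divisible by `N`. -/
def Gamma0R (N : ℕ) : Set (Matrix.SpecialLinearGroup (Fin 2) ℝ) :=
  {g | ∃ a b c d : ℤ, a * d - b * c = 1 ∧ (N : ℤ) ∣ c ∧
    (g : Matrix (Fin 2) (Fin 2) ℝ) = !![(a : ℝ), (b : ℝ); (c : ℝ), (d : ℝ)]}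

/-- `Γ₀(N)⁺` as a subgroup of `SL₂(ℝ)` (the set `GammaNPlus N` is a subgroup, so it
coincides with the subgroup it generates). -/
def GammaNPlusSubgroup (N : ℕ) : Subgroup (Matrix.SpecialLinearGroup (Fin 2) ℝ) :=
  Subgroup.closure (GammaNPlus N)

/-- `Γ₀(N)` as a subgroup of `SL₂(ℝ)`. -/
def Gamma0RSubgroup (N : ℕ) : Subgroup (Matrix.SpecialLinearGroup (Fin 2) ℝ) :=
  Subgroup.closure (Gamma0R N)

/-! ### Auxiliary material -/

open Matrix

local notation "SL2" => Matrix.SpecialLinearGroup (Fin 2) ℝ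

/-- The defining predicate of `GammaNPlus` with the scaling factor `e` pulled out front. -/
def QNP (N : ℕ) (g : SL2) (e : ℕ) : Prop :=
  ∃ a b c d : ℤ, 0 < e ∧ e ∣ N ∧ (e : ℤ) ∣ a ∧ (e : ℤ) ∣ d ∧ (N : ℤ) ∣ c ∧
    a * d - b * c = (e : ℤ) ∧
    (g : Matrix (Fin 2) (Fin 2) ℝ) =
      (Real.sqrt e)⁻¹ • !![(a : ℝ), (b : ℝ); (c : ℝ), (d : ℝ)]

lemma mem_gammaNPlus_iff {N : ℕ} {g : SL2} : g ∈ GammaNPlus N ↔ ∃ e, QNP N g e := by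
  constructor
  · rintro ⟨a, b, c, d, e, h⟩; exact ⟨e, a, b, c, d, h⟩
  · rintro ⟨e, a, b, c, d, h⟩; exact ⟨a, b, c, d, e, h⟩

lemma QNP_pos {N : ℕ} {g : SL2} {e : ℕ} (h : QNP N g e) : 0 < e := by
  obtain ⟨a, b, c, d, h, -⟩ := h; exact h

lemma QNP_dvd {N : ℕ} {g : SL2} {e : ℕ} (h : QNP N g e) : e ∣ N := by
  obtain ⟨a, b, c, d, -, h, -⟩ := h; exact h

lemma sf_eq_of_mul_sq {e f a b : ℕ} (he : Squarefree e) (hf : Squarefree f)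
    (ha : a ≠ 0) (h : f * a ^ 2 = e * b ^ 2) : e = f := by
  have he0 : e ≠ 0 := he.ne_zero
  have hf0 : f ≠ 0 := hf.ne_zero
  have hb : b ≠ 0 := by
    rintro rfl
    simp only [ne_eq, pow_two, Nat.mul_eq_zero] at h
    simp at h
    tauto
  have hfact : (f * a ^ 2).factorization = (e * b ^ 2).factorization := by rw [h]
  rw [Nat.factorization_mul hf0 (pow_ne_zero _ ha), Nat.factorization_mul he0 (pow_ne_zero _ hb),
    Nat.factorization_pow, Nat.factorization_pow] at hfact
  have key : e.factorization = f.factorization := by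
    ext p
    have h1 := DFunLike.congr_fun hfact p
    simp only [Finsupp.add_apply, Finsupp.smul_apply, smul_eq_mul] at h1
    have h2 : e.factorization p ≤ 1 := he.natFactorization_le_one p
    have h3 : f.factorization p ≤ 1 := hf.natFactorization_le_one p
    omega
  exact Nat.factorization_inj he0 hf0 key

lemma QNP_unique {N : ℕ} (hsq : Squarefree N) {g : SL2} {e f : ℕ}
    (he : QNP N g e) (hf : QNP N g f) : e = f := by
  obtain ⟨a, b, c, d, he0, heN, -, -, -, hdet, hmat⟩ := he
  obtain ⟨a', b', c', d', hf0, hfN, -, -, -, hdet', hmat'⟩ := hf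
  have hse : (0:ℝ) < Real.sqrt e := Real.sqrt_pos.mpr (by exact_mod_cast he0)
  have hsf : (0:ℝ) < Real.sqrt f := Real.sqrt_pos.mpr (by exact_mod_cast hf0)
  have hent : ∀ i j, (Real.sqrt e)⁻¹ * (!![(a : ℝ), b; c, d] i j)
      = (Real.sqrt f)⁻¹ * (!![(a' : ℝ), b'; c', d'] i j) := by
    intro i j
    have h0 := hmat.symm.trans hmat'
    have h2 := congrFun (congrFun h0 i) j
    simpa using h2
  have hsq2 : ∀ i j, (f : ℝ) * (!![(a : ℝ), b; c, d] i j) ^ 2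
      = (e : ℝ) * (!![(a' : ℝ), b'; c', d'] i j) ^ 2 := by
    intro i j
    have h1 := hent i j
    set x : ℝ := !![(a : ℝ), b; c, d] i j with hxdef
    set y : ℝ := !![(a' : ℝ), b'; c', d'] i j with hydef
    have h2 : Real.sqrt f * x = Real.sqrt e * y := by
      field_simp at h1
      linarith [h1]
    have h3 := congrArg (· ^ 2) h2
    simp only [mul_pow] at h3
    rw [Real.sq_sqrt (by positivity : (0:ℝ) ≤ (f:ℝ)),
      Real.sq_sqrt (by positivity : (0:ℝ) ≤ (e:ℝ))] at h3
    exact h3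
  have hnz : a ≠ 0 ∨ b ≠ 0 := by
    by_contra hcon
    push_neg at hcon
    obtain ⟨rfl, rfl⟩ := hcon
    simp at hdet
    omega
  have hkey : ∀ (x y : ℤ), x ≠ 0 → (f : ℝ) * (x:ℝ) ^ 2 = (e : ℝ) * (y:ℝ) ^ 2 → e = f := by
    intro x y hx hxy
    have hint : (f : ℤ) * x ^ 2 = (e : ℤ) * y ^ 2 := by exact_mod_cast hxy
    have hnat : f * x.natAbs ^ 2 = e * y.natAbs ^ 2 := by
      have h4 := congrArg Int.natAbs hint
      simpa [Int.natAbs_mul, Int.natAbs_pow] using h4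
    exact sf_eq_of_mul_sq (hsq.squarefree_of_dvd heN) (hsq.squarefree_of_dvd hfN)
      (by simpa using hx) hnat
  rcases hnz with hx | hx
  · exact hkey a a' hx (by simpa using hsq2 0 0)
  · exact hkey b b' hx (by simpa using hsq2 0 1)

lemma QNP_one (N : ℕ) : QNP N 1 1 := by
  refine ⟨1, 0, 0, 1, one_pos, one_dvd _, dvd_refl _, dvd_refl _, dvd_zero _, by norm_num, ?_⟩
  simp [Matrix.SpecialLinearGroup.coe_one, Matrix.one_fin_two]

lemma QNP_inv {N : ℕ} {g : SL2} {e : ℕ} (h : QNP N g e) : QNP N g⁻¹ e := by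
  obtain ⟨a, b, c, d, he0, heN, hea, hed, hNc, hdet, hmat⟩ := h
  refine ⟨d, -b, -c, a, he0, heN, hed, hea, (dvd_neg).mpr hNc, by linarith [hdet], ?_⟩
  rw [Matrix.SpecialLinearGroup.SL2_inv_expl]
  ext i j
  fin_cases i <;> fin_cases j <;>
    simp [hmat, Matrix.smul_apply]
lemma QNP_mul {N : ℕ} (hsq : Squarefree N) {g h : SL2} {e f : ℕ}
    (hg : QNP N g e) (hh : QNP N h f) :
    QNP N (g * h) ((e / Nat.gcd e f) * (f / Nat.gcd e f)) := by
  obtain ⟨a, b, c, d, he0, heN, hea, hed, hNc, hdet, hmat⟩ := hg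
  obtain ⟨a', b', c', d', hf0, hfN, hfa', hfd', hNc', hdet', hmat'⟩ := hh
  set g0 := Nat.gcd e f with hg0def
  have hg0 : 0 < g0 := Nat.gcd_pos_of_pos_left f he0
  have hg0e : g0 ∣ e := Nat.gcd_dvd_left e f
  have hg0f : g0 ∣ f := Nat.gcd_dvd_right e f
  set e1 := e / g0 with he1def
  set f1 := f / g0 with hf1def
  have hee1 : g0 * e1 = e := Nat.mul_div_cancel' hg0e
  have hff1 : g0 * f1 = f := Nat.mul_div_cancel' hg0f
  have he1e : e1 ∣ e := Nat.div_dvd_of_dvd hg0e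
  have hf1f : f1 ∣ f := Nat.div_dvd_of_dvd hg0f
  have cop : Nat.Coprime e1 f1 := Nat.coprime_div_gcd_div_gcd hg0
  have sqe : Squarefree e := hsq.squarefree_of_dvd heN
  have sqf : Squarefree f := hsq.squarefree_of_dvd hfN
  have cop_ge1 : Nat.Coprime g0 e1 := by
    have := sqe; rw [← hee1, Nat.squarefree_mul_iff] at this; exact this.1
  have cop_gf1 : Nat.Coprime g0 f1 := by
    have := sqf; rw [← hff1, Nat.squarefree_mul_iff] at this; exact this.1
  have he10 : 0 < e1 := Nat.div_pos (Nat.le_of_dvd he0 hg0e) hg0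
  have hf10 : 0 < f1 := Nat.div_pos (Nat.le_of_dvd hf0 hg0f) hg0
  have hEN : e1 * f1 ∣ N := cop.mul_dvd_of_dvd_of_dvd (he1e.trans heN) (hf1f.trans hfN)
  -- integer divisibility data
  have hg0e' : (g0 : ℤ) ∣ (e : ℤ) := Int.natCast_dvd_natCast.mpr hg0e
  have hg0f' : (g0 : ℤ) ∣ (f : ℤ) := Int.natCast_dvd_natCast.mpr hg0f
  have he1e' : (e1 : ℤ) ∣ (e : ℤ) := Int.natCast_dvd_natCast.mpr he1e
  have hf1f' : (f1 : ℤ) ∣ (f : ℤ) := Int.natCast_dvd_natCast.mpr hf1f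
  have heN' : (e : ℤ) ∣ (N : ℤ) := Int.natCast_dvd_natCast.mpr heN
  have hfN' : (f : ℤ) ∣ (N : ℤ) := Int.natCast_dvd_natCast.mpr hfN
  have hga : (g0:ℤ) ∣ a := hg0e'.trans hea
  have hgd : (g0:ℤ) ∣ d := hg0e'.trans hed
  have hgc : (g0:ℤ) ∣ c := (hg0e'.trans heN').trans hNc
  have hga' : (g0:ℤ) ∣ a' := hg0f'.trans hfa'
  have hgd' : (g0:ℤ) ∣ d' := hg0f'.trans hfd'
  have hgc' : (g0:ℤ) ∣ c' := (hg0f'.trans hfN').trans hNc'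
  obtain ⟨A, hA⟩ : (g0:ℤ) ∣ a * a' + b * c' :=
    dvd_add (hga.mul_right _) (Dvd.dvd.mul_left hgc' b)
  obtain ⟨B, hB⟩ : (g0:ℤ) ∣ a * b' + b * d' :=
    dvd_add (hga.mul_right _) (Dvd.dvd.mul_left hgd' b)
  obtain ⟨C, hC⟩ : (g0:ℤ) ∣ c * a' + d * c' :=
    dvd_add (hgc.mul_right _) (hgd.mul_right _)
  obtain ⟨D, hD⟩ : (g0:ℤ) ∣ c * b' + d * d' :=
    dvd_add (hgc.mul_right _) (hgd.mul_right _)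
  have hg00 : (g0:ℤ) ≠ 0 := by exact_mod_cast hg0.ne'
  -- coprimality over ℤ
  have icop_ge1 : IsCoprime (e1:ℤ) (g0:ℤ) := by
    rw [Int.isCoprime_iff_gcd_eq_one]; simpa [Int.gcd] using cop_ge1.symm
  have icop_gf1 : IsCoprime (f1:ℤ) (g0:ℤ) := by
    rw [Int.isCoprime_iff_gcd_eq_one]; simpa [Int.gcd] using cop_gf1.symm
  have icop_ef : IsCoprime (e1:ℤ) (f1:ℤ) := by
    rw [Int.isCoprime_iff_gcd_eq_one]; simpa [Int.gcd] using cop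
  have he1a : (e1:ℤ) ∣ a := he1e'.trans hea
  have he1d : (e1:ℤ) ∣ d := he1e'.trans hed
  have he1c : (e1:ℤ) ∣ c := ((he1e'.trans heN').trans hNc)
  have he1c' : (e1:ℤ) ∣ c' := ((he1e'.trans heN').trans hNc')
  have hf1a' : (f1:ℤ) ∣ a' := hf1f'.trans hfa'
  have hf1d' : (f1:ℤ) ∣ d' := hf1f'.trans hfd'
  have hf1c : (f1:ℤ) ∣ c := ((hf1f'.trans hfN').trans hNc)
  have hf1c' : (f1:ℤ) ∣ c' := ((hf1f'.trans hfN').trans hNc')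
  -- E divides A
  have hEA : ((e1 * f1 : ℕ) : ℤ) ∣ A := by
    have h1 : (e1:ℤ) ∣ A := by
      have hh : (e1:ℤ) ∣ (g0:ℤ) * A := by
        rw [← hA]; exact dvd_add (he1a.mul_right _) (Dvd.dvd.mul_left he1c' b)
      exact (icop_ge1.dvd_of_dvd_mul_left hh)
    have h2 : (f1:ℤ) ∣ A := by
      have hh : (f1:ℤ) ∣ (g0:ℤ) * A := by
        rw [← hA]; exact dvd_add (Dvd.dvd.mul_left hf1a' a) (Dvd.dvd.mul_left hf1c' b)
      exact (icop_gf1.dvd_of_dvd_mul_left hh)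
    push_cast
    exact icop_ef.mul_dvd h1 h2
  -- E divides D
  have hED : ((e1 * f1 : ℕ) : ℤ) ∣ D := by
    have h1 : (e1:ℤ) ∣ D := by
      have hh : (e1:ℤ) ∣ (g0:ℤ) * D := by
        rw [← hD]; exact dvd_add (he1c.mul_right _) (he1d.mul_right _)
      exact (icop_ge1.dvd_of_dvd_mul_left hh)
    have h2 : (f1:ℤ) ∣ D := by
      have hh : (f1:ℤ) ∣ (g0:ℤ) * D := by
        rw [← hD]; exact dvd_add (hf1c.mul_right _) (Dvd.dvd.mul_left hf1d' d)
      exact (icop_gf1.dvd_of_dvd_mul_left hh)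
    push_cast
    exact icop_ef.mul_dvd h1 h2
  -- N divides C
  have hNC : (N:ℤ) ∣ C := by
    have h1 : (N:ℤ) * (g0:ℤ) ∣ (g0:ℤ) * C := by
      rw [← hC]
      exact dvd_add (mul_dvd_mul hNc hga') (by rw [mul_comm (N:ℤ) (g0:ℤ)]; exact mul_dvd_mul hgd hNc')
    obtain ⟨k, hk⟩ := h1
    refine ⟨k, mul_left_cancel₀ hg00 ?_⟩
    rw [hk]; ring
  -- determinant
  have hdetE : A * D - B * C = ((e1 * f1 : ℕ) : ℤ) := by
    have h2 : (e:ℤ) * (f:ℤ) = (g0:ℤ)^2 * ((e1 * f1 : ℕ) : ℤ) := by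
      have hx : (g0 * e1) * (g0 * f1) = g0^2 * (e1 * f1) := by ring
      rw [hee1, hff1] at hx
      exact_mod_cast hx
    have key : (g0:ℤ)^2 * (A * D - B * C) = (g0:ℤ)^2 * ((e1 * f1 : ℕ) : ℤ) := by
      have h1 : ((g0:ℤ) * A) * ((g0:ℤ) * D) - ((g0:ℤ) * B) * ((g0:ℤ) * C)
          = (a * d - b * c) * (a' * d' - b' * c') := by
        rw [← hA, ← hB, ← hC, ← hD]; ring
      calc (g0:ℤ)^2 * (A * D - B * C)
          = ((g0:ℤ) * A) * ((g0:ℤ) * D) - ((g0:ℤ) * B) * ((g0:ℤ) * C) := by ring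
        _ = (a * d - b * c) * (a' * d' - b' * c') := h1
        _ = (e:ℤ) * (f:ℤ) := by rw [hdet, hdet']
        _ = (g0:ℤ)^2 * ((e1 * f1 : ℕ) : ℤ) := h2
    exact mul_left_cancel₀ (pow_ne_zero 2 hg00) key
  refine ⟨A, B, C, D, Nat.mul_pos he10 hf10, hEN, hEA, hED, hNC, hdetE, ?_⟩
  -- matrix identity
  have hE0 : (0:ℝ) < ((e1 * f1 : ℕ) : ℝ) := by
    have := Nat.mul_pos he10 hf10; exact_mod_cast this
  have hsE : (0:ℝ) < Real.sqrt ((e1 * f1 : ℕ) : ℝ) := Real.sqrt_pos.mpr hE0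
  have hse : (0:ℝ) < Real.sqrt e := Real.sqrt_pos.mpr (by exact_mod_cast he0)
  have hsf : (0:ℝ) < Real.sqrt f := Real.sqrt_pos.mpr (by exact_mod_cast hf0)
  have hsqrt : Real.sqrt e * Real.sqrt f = (g0:ℝ) * Real.sqrt ((e1 * f1 : ℕ) : ℝ) := by
    rw [← Real.sqrt_mul (by positivity) (f:ℝ)]
    have h2 : (e:ℝ) * (f:ℝ) = (g0:ℝ)^2 * ((e1 * f1 : ℕ) : ℝ) := by
      have hx : (g0 * e1) * (g0 * f1) = g0^2 * (e1 * f1) := by ring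
      rw [hee1, hff1] at hx
      exact_mod_cast hx
    rw [h2, Real.sqrt_mul (by positivity), Real.sqrt_sq (by positivity)]
  have coemul : ((g * h : SL2) : Matrix (Fin 2) (Fin 2) ℝ)
      = (g : Matrix (Fin 2) (Fin 2) ℝ) * (h : Matrix (Fin 2) (Fin 2) ℝ) := rfl
  rw [coemul, hmat, hmat', Matrix.smul_mul, Matrix.mul_smul, smul_smul, Matrix.mul_fin_two]
  have hmat3 : !![(a:ℝ) * a' + b * c', (a:ℝ) * b' + b * d';
      (c:ℝ) * a' + d * c', (c:ℝ) * b' + d * d']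
      = (g0:ℝ) • !![(A:ℝ), (B:ℝ); (C:ℝ), (D:ℝ)] := by
    ext i j
    fin_cases i <;> fin_cases j <;> simp [Matrix.smul_apply]
    · exact_mod_cast congrArg (Int.cast : ℤ → ℝ) hA
    · exact_mod_cast congrArg (Int.cast : ℤ → ℝ) hB
    · exact_mod_cast congrArg (Int.cast : ℤ → ℝ) hC
    · exact_mod_cast congrArg (Int.cast : ℤ → ℝ) hD
  rw [hmat3, smul_smul]
  congr 1
  have hg0R : (0:ℝ) < (g0:ℝ) := by exact_mod_cast hg0
  field_simp
  rw [hsqrt]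

/-- `GammaNPlus N` as a bundled subgroup (for squarefree `N`). -/
def plusSub (N : ℕ) (hsq : Squarefree N) : Subgroup SL2 where
  carrier := GammaNPlus N
  one_mem' := mem_gammaNPlus_iff.mpr ⟨1, QNP_one N⟩
  mul_mem' := by
    intro g h hg hh
    obtain ⟨e, hge⟩ := mem_gammaNPlus_iff.mp hg
    obtain ⟨f, hhf⟩ := mem_gammaNPlus_iff.mp hh
    exact mem_gammaNPlus_iff.mpr ⟨_, QNP_mul hsq hge hhf⟩
  inv_mem' := by
    intro g hg
    obtain ⟨e, hge⟩ := mem_gammaNPlus_iff.mp hg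
    exact mem_gammaNPlus_iff.mpr ⟨e, QNP_inv hge⟩

/-- `Gamma0R N` as a bundled subgroup. -/
def gamma0Sub (N : ℕ) : Subgroup SL2 where
  carrier := Gamma0R N
  one_mem' := ⟨1, 0, 0, 1, by norm_num, dvd_zero _, by
    simp [Matrix.SpecialLinearGroup.coe_one, Matrix.one_fin_two]⟩
  mul_mem' := by
    rintro g h ⟨a, b, c, d, hdet, hNc, hmat⟩ ⟨a', b', c', d', hdet', hNc', hmat'⟩
    refine ⟨a * a' + b * c', a * b' + b * d', c * a' + d * c', c * b' + d * d',
      by linear_combination (a' * d' - b' * c') * hdet + hdet',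
      dvd_add (hNc.mul_right _) (Dvd.dvd.mul_left hNc' d), ?_⟩
    have coemul : ((g * h : SL2) : Matrix (Fin 2) (Fin 2) ℝ)
        = (g : Matrix (Fin 2) (Fin 2) ℝ) * (h : Matrix (Fin 2) (Fin 2) ℝ) := rfl
    rw [coemul, hmat, hmat', Matrix.mul_fin_two]
    push_cast
    rfl
  inv_mem' := by
    rintro g ⟨a, b, c, d, hdet, hNc, hmat⟩
    refine ⟨d, -b, -c, a, by linarith [hdet], (dvd_neg).mpr hNc, ?_⟩
    rw [Matrix.SpecialLinearGroup.SL2_inv_expl]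
    ext i j
    fin_cases i <;> fin_cases j <;> simp [hmat]

lemma mem_plusSubgroup_iff {N : ℕ} (hsq : Squarefree N) {x : SL2} :
    x ∈ GammaNPlusSubgroup N ↔ ∃ e, QNP N x e := by
  have h : GammaNPlusSubgroup N = plusSub N hsq := Subgroup.closure_eq (plusSub N hsq)
  rw [h]
  exact mem_gammaNPlus_iff

lemma mem_gamma0Subgroup_iff {N : ℕ} {x : SL2} :
    x ∈ Gamma0RSubgroup N ↔ x ∈ Gamma0R N := by
  have h : Gamma0RSubgroup N = gamma0Sub N := Subgroup.closure_eq (gamma0Sub N)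
  rw [h]
  exact Iff.rfl

open Classical in
/-- The scaling factor of an element of `Γ₀(N)⁺`. -/
noncomputable def eOf (N : ℕ) (g : SL2) : ℕ :=
  if h : ∃ e, QNP N g e then h.choose else 1

lemma eOf_eq {N : ℕ} (hsq : Squarefree N) {g : SL2} {e : ℕ} (h : QNP N g e) :
    eOf N g = e := by
  have hex : ∃ e, QNP N g e := ⟨e, h⟩
  classical
  rw [eOf]
  rw [dif_pos hex]
  exact QNP_unique hsq hex.choose_spec h

lemma fact_arith {e f : ℕ} (he : 0 < e) (hf : 0 < f) (p : ℕ) :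
    ((((e / Nat.gcd e f) * (f / Nat.gcd e f)).factorization p : ℕ) : ZMod 2)
      = ((e.factorization p : ℕ) : ZMod 2) + ((f.factorization p : ℕ) : ZMod 2) := by
  set g0 := Nat.gcd e f with hg0def
  have hg0 : 0 < g0 := Nat.gcd_pos_of_pos_left f he
  have hg0e : g0 ∣ e := Nat.gcd_dvd_left e f
  have hg0f : g0 ∣ f := Nat.gcd_dvd_right e f
  have he1 : 0 < e / g0 := Nat.div_pos (Nat.le_of_dvd he hg0e) hg0
  have hf1 : 0 < f / g0 := Nat.div_pos (Nat.le_of_dvd hf hg0f) hg0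
  have hmul : ((e / g0) * (f / g0)).factorization p
      = (e / g0).factorization p + (f / g0).factorization p := by
    rw [Nat.factorization_mul he1.ne' hf1.ne']; rfl
  have hdive : (e / g0).factorization p = e.factorization p - g0.factorization p := by
    rw [Nat.factorization_div hg0e]; rfl
  have hdivf : (f / g0).factorization p = f.factorization p - g0.factorization p := by
    rw [Nat.factorization_div hg0f]; rfl
  have hle1 : g0.factorization p ≤ e.factorization p :=
    (Nat.factorization_le_iff_dvd hg0.ne' he.ne').mpr hg0e p
  have hle2 : g0.factorization p ≤ f.factorization p :=
    (Nat.factorization_le_iff_dvd hg0.ne' hf.ne').mpr hg0f p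
  rw [hmul, hdive, hdivf]
  set x := e.factorization p
  set y := f.factorization p
  set m := g0.factorization p
  have harith : (x - m) + (y - m) + 2 * m = x + y := by omega
  have hcast := congrArg (fun n : ℕ => (n : ZMod 2)) harith
  push_cast at hcast
  have h2 : (2 : ZMod 2) = 0 := rfl
  rw [h2, zero_mul, add_zero] at hcast
  push_cast
  linear_combination hcast

/-- The homomorphism `Γ₀(N)⁺ → (ZMod 2)^{primeFactors N}`, `g ↦ (v_p (e g))_p`. -/
noncomputable def psi (N : ℕ) (hsq : Squarefree N) :
    ↥(GammaNPlusSubgroup N) →* ((p : ↥N.primeFactors) → Multiplicative (ZMod 2)) where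
  toFun g := fun p => Multiplicative.ofAdd (((eOf N ↑g).factorization ↑p : ℕ) : ZMod 2)
  map_one' := by
    have h1 : eOf N (1 : SL2) = 1 := eOf_eq hsq (QNP_one N)
    funext p
    simp [h1]
  map_mul' := by
    intro x y
    obtain ⟨e, hxe⟩ := (mem_plusSubgroup_iff hsq).mp x.2
    obtain ⟨f, hyf⟩ := (mem_plusSubgroup_iff hsq).mp y.2
    have hmul : QNP N ((x : SL2) * (y : SL2)) ((e / Nat.gcd e f) * (f / Nat.gcd e f)) :=
      QNP_mul hsq hxe hyf
    have hcoe : ((x * y : ↥(GammaNPlusSubgroup N)) : SL2) = (x : SL2) * (y : SL2) := rfl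
    funext p
    have hx' : eOf N (x : SL2) = e := eOf_eq hsq hxe
    have hy' : eOf N (y : SL2) = f := eOf_eq hsq hyf
    have hxy' : eOf N ((x : SL2) * (y : SL2)) = (e / Nat.gcd e f) * (f / Nat.gcd e f) :=
      eOf_eq hsq hmul
    simp only [hcoe, hxy', hx', hy', Pi.mul_apply]
    rw [← ofAdd_add]
    congr 1
    exact fact_arith (QNP_pos hxe) (QNP_pos hyf) ↑p

lemma ker_psi (N : ℕ) (hN : 0 < N) (hsq : Squarefree N) :
    (psi N hsq).ker = (Gamma0RSubgroup N).subgroupOf (GammaNPlusSubgroup N) := by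
  ext x
  rw [MonoidHom.mem_ker, Subgroup.mem_subgroupOf, mem_gamma0Subgroup_iff]
  constructor
  · intro hker
    obtain ⟨e, hxe⟩ := (mem_plusSubgroup_iff hsq).mp x.2
    have he' : eOf N (x : SL2) = e := eOf_eq hsq hxe
    have he1 : e = 1 := by
      by_contra hne
      have hepos : 0 < e := QNP_pos hxe
      have heN : e ∣ N := QNP_dvd hxe
      obtain ⟨p, hp, hpe⟩ := Nat.exists_prime_and_dvd hne
      have hpN : p ∈ N.primeFactors := Nat.mem_primeFactors.mpr ⟨hp, hpe.trans heN, hN.ne'⟩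
      have hfp : e.factorization p = 1 := by
        have h1 : 0 < e.factorization p := hp.factorization_pos_of_dvd hepos.ne' hpe
        have h2 : e.factorization p ≤ 1 :=
          (hsq.squarefree_of_dvd heN).natFactorization_le_one p
        omega
      have hcomp := congrFun hker ⟨p, hpN⟩
      simp only [psi, MonoidHom.coe_mk, OneHom.coe_mk, he', hfp, Nat.cast_one,
        Pi.one_apply, ofAdd_eq_one] at hcomp
      exact one_ne_zero hcomp
    subst he1
    obtain ⟨a, b, c, d, -, -, -, -, hNc, hdet, hmat⟩ := hxe
    refine ⟨a, b, c, d, by exact_mod_cast hdet, hNc, ?_⟩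
    rw [hmat]
    norm_num
  · rintro ⟨a, b, c, d, hdet, hNc, hmat⟩
    have hq : QNP N (x : SL2) 1 := by
      refine ⟨a, b, c, d, one_pos, one_dvd _, one_dvd _, one_dvd _, hNc,
        by exact_mod_cast hdet, ?_⟩
      rw [hmat]
      norm_num
    have he' : eOf N (x : SL2) = 1 := eOf_eq hsq hq
    funext p
    simp [psi, he']

lemma psi_surj (N : ℕ) (hN : 0 < N) (hsq : Squarefree N) :
    Function.Surjective (psi N hsq) := by
  classical
  intro t
  set S : Finset ℕ := N.primeFactors.filter
    (fun p => ∃ h : p ∈ N.primeFactors, t ⟨p, h⟩ = Multiplicative.ofAdd 1) with hSdef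
  have hSsub : S ⊆ N.primeFactors := Finset.filter_subset _ _
  set e : ℕ := ∏ p ∈ S, p with hedef
  have hprime : ∀ p ∈ S, p.Prime := fun p hp =>
    Nat.prime_of_mem_primeFactors (hSsub hp)
  have he0 : 0 < e := Finset.prod_pos (fun p hp => (hprime p hp).pos)
  have heN : e ∣ N := by
    have h1 : ∏ p ∈ N.primeFactors, p = N := Nat.prod_primeFactors_of_squarefree hsq
    calc e ∣ ∏ p ∈ N.primeFactors, p := Finset.prod_dvd_prod_of_subset S N.primeFactors _ hSsub
      _ = N := h1
  have hfact : ∀ q : ℕ, e.factorization q = if q ∈ S then 1 else 0 := by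
    intro q
    rw [hedef, Nat.factorization_prod (fun p hp => (hprime p hp).ne_zero)]
    rw [Finsupp.finset_sum_apply]
    rw [Finset.sum_congr rfl (fun p hp => by
      rw [(hprime p hp).factorization, Finsupp.single_apply])]
    exact Finset.sum_ite_eq' S q (fun _ => 1)
  -- Bezout data
  have hcop : Nat.Coprime e (N / e) := by
    have h1 : Squarefree (e * (N / e)) := by rwa [Nat.mul_div_cancel' heN]
    exact (Nat.squarefree_mul_iff.mp h1).1
  have hic : IsCoprime (e : ℤ) ((N / e : ℕ) : ℤ) := by
    exact Nat.isCoprime_iff_coprime.mpr hcop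
  obtain ⟨u, v, huv⟩ := hic
  have hNe : (e : ℤ) * ((N / e : ℕ) : ℤ) = (N : ℤ) := by
    exact_mod_cast Nat.mul_div_cancel' heN
  have hdet : ((e:ℤ) * u) * (e:ℤ) - (-v) * (N:ℤ) = (e:ℤ) := by
    linear_combination (e:ℤ) * huv - v * hNe
  -- the Atkin–Lehner element
  set M : Matrix (Fin 2) (Fin 2) ℝ :=
    (Real.sqrt e)⁻¹ • !![(((e:ℤ) * u : ℤ) : ℝ), (((-v : ℤ)) : ℝ); (((N:ℤ)) : ℝ), (((e:ℤ)) : ℝ)]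
    with hMdef
  have heR : (0:ℝ) < (e:ℝ) := by exact_mod_cast he0
  have hdetM : M.det = 1 := by
    rw [hMdef, Matrix.det_smul, Matrix.det_fin_two_of]
    have h2 : (((e:ℤ) * u : ℤ) : ℝ) * (((e:ℤ) : ℤ) : ℝ) - (((-v : ℤ)) : ℝ) * (((N:ℤ)) : ℝ)
        = (e : ℝ) := by exact_mod_cast hdet
    rw [h2]
    simp only [Fintype.card_fin]
    rw [inv_pow, Real.sq_sqrt heR.le]
    field_simp
  set W : SL2 := ⟨M, hdetM⟩ with hWdef
  have hq : QNP N W e := by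
    refine ⟨(e:ℤ) * u, -v, (N:ℤ), (e:ℤ), he0, heN, dvd_mul_right _ _, dvd_refl _,
      dvd_refl _, hdet, rfl⟩
  have hW : W ∈ GammaNPlusSubgroup N := (mem_plusSubgroup_iff hsq).mpr ⟨e, hq⟩
  refine ⟨⟨W, hW⟩, ?_⟩
  have he' : eOf N W = e := eOf_eq hsq hq
  funext p
  have hz : ∀ z : Multiplicative (ZMod 2),
      z = Multiplicative.ofAdd 0 ∨ z = Multiplicative.ofAdd 1 := by decide
  show Multiplicative.ofAdd (((eOf N W).factorization ↑p : ℕ) : ZMod 2) = t p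
  rw [he', hfact ↑p]
  by_cases hmem : (p : ℕ) ∈ S
  · rw [if_pos hmem]
    obtain ⟨hpN, h, ht⟩ := Finset.mem_filter.mp hmem
    have hpp : (⟨(p : ℕ), h⟩ : ↥N.primeFactors) = p := Subtype.ext rfl
    rw [hpp] at ht
    rw [ht]
    norm_num
  · rw [if_neg hmem]
    have hne : t p ≠ Multiplicative.ofAdd 1 := by
      intro hcon
      exact hmem (Finset.mem_filter.mpr ⟨p.2, p.2, hcon⟩)
    rcases hz (t p) with h0 | h1
    · rw [h0]; exact congrArg Multiplicative.ofAdd (by norm_num)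
    · exact absurd h1 hne

theorem gamma0_relindex_gammaNPlus (N : ℕ) (hN : 0 < N) (hsq : Squarefree N) :
    (Gamma0RSubgroup N).relIndex (GammaNPlusSubgroup N) = 2 ^ N.primeFactors.card := by
  have h1 : (Gamma0RSubgroup N).relIndex (GammaNPlusSubgroup N)
      = ((Gamma0RSubgroup N).subgroupOf (GammaNPlusSubgroup N)).index := rfl
  rw [h1, ← ker_psi N hN hsq, Subgroup.index_ker]
  have h2 : (psi N hsq).range = ⊤ := MonoidHom.range_eq_top.mpr (psi_surj N hN hsq)
  rw [h2, Subgroup.card_top, Nat.card_pi]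
  have h3 : ∀ p : ↥N.primeFactors, Nat.card (Multiplicative (ZMod 2)) = 2 := by
    intro p
    simp [Nat.card_eq_fintype_card]
  rw [Finset.prod_congr rfl (fun p _ => h3 p), Finset.prod_const]
  congr 1
  simp [Fintype.card_coe]
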